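/- Let A ∈ [0,∞)^{3×2} be the matrix with rows (1,0), (0,1), (1/2,1/2). If H ∈ [0,∞)^{3×3} is symmetric (H_{ij} = H_{ji} for all i,j) and satisfies H ⋄ A = A, then H is the 3×3 identity matrix. -/

import Mathlib

/-- Max-linear matrix product: `(B ⋄ C) i j = max_l B i l * C l j`. -/
noncomputable def maxMat {m n k : ℕ} (B : Fin m → Fin n → ℝ) (C : Fin n → Fin k → ℝ) :
    Fin m → Fin k → ℝ :=
  fun i j => ⨆ l, B i l * C l j

lemma fin3_iSup (f : Fin 3 → ℝ) : (⨆ l, f l) = max (f 0) (max (f 1) (f 2)) := by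
  have hbdd : BddAbove (Set.range f) := Set.Finite.bddAbove (Set.finite_range f)
  apply le_antisymm
  · apply ciSup_le
    intro l
    fin_cases l <;> simp [le_max_iff]
  · exact max_le (le_ciSup hbdd 0) (max_le (le_ciSup hbdd 1) (le_ciSup hbdd 2))

/-- Core computation of Example S2 of the paper: if a symmetric nonnegative `3×3` matrix
`H` satisfies `H ⋄ A = A` for the matrix `A` with rows `(1,0)`, `(0,1)`, `(1/2,1/2)`,
then `H` is the identity matrix. -/
theorem symmetric_maxlinear_fixing_A_is_identity
    (H : Fin 3 → Fin 3 → ℝ)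
    (hH_nonneg : ∀ i j, 0 ≤ H i j)
    (hH_symm : ∀ i j, H i j = H j i)
    (hfix : maxMat H (![![(1:ℝ), 0], ![0, 1], ![1/2, 1/2]])
      = ![![(1:ℝ), 0], ![0, 1], ![1/2, 1/2]]) :
    H = fun i j => if i = j then 1 else 0 := by
  have key : ∀ i j, (⨆ l, H i l * (![![(1:ℝ), 0], ![0, 1], ![1/2, 1/2]]) l j)
      = (![![(1:ℝ), 0], ![0, 1], ![1/2, 1/2]]) i j := fun i j =>
    congrFun (congrFun hfix i) j
  have e00 := key 0 0
  have e01 := key 0 1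
  have e10 := key 1 0
  have e11 := key 1 1
  have e20 := key 2 0
  have e21 := key 2 1
  simp only [fin3_iSup] at e00 e01 e10 e11 e20 e21
  norm_num at e00 e01 e10 e11 e20 e21
  -- off-diagonal zeros
  have h01 : H 0 1 = 0 := le_antisymm e01.1 (hH_nonneg 0 1)
  have h02 : H 0 2 = 0 := by
    have : H 0 2 * (1/2) ≤ 0 := e01.2; have := hH_nonneg 0 2; linarith
  have h10 : H 1 0 = 0 := by
    have hle : H 1 0 ≤ 0 := e10 ▸ le_max_left _ _
    exact le_antisymm hle (hH_nonneg 1 0)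
  have h12 : H 1 2 = 0 := by
    have hle : H 1 2 * (1/2) ≤ 0 :=
      e10 ▸ le_trans (le_max_right _ _) (le_max_right _ _)
    have := hH_nonneg 1 2; linarith
  have h20 : H 2 0 = 0 := (hH_symm 2 0).trans h02
  have h21 : H 2 1 = 0 := (hH_symm 2 1).trans h12
  -- diagonal ones
  have h00 : H 0 0 = 1 := by
    rw [h02] at e00
    norm_num [max_eq_left (hH_nonneg 0 0)] at e00
    exact e00
  have h11 : H 1 1 = 1 := by
    rw [h12] at e11
    norm_num [max_eq_left (hH_nonneg 1 1), max_eq_right (hH_nonneg 1 1)] at e11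
    exact e11
  have h22 : H 2 2 = 1 := by
    rw [h20] at e20
    have hhalf : (0:ℝ) ≤ H 2 2 * (1/2) := by have := hH_nonneg 2 2; linarith
    have e20 : max 0 (max 0 (H 2 2 * (1/2))) = (1/2:ℝ) := e20
    rw [max_eq_right hhalf, max_eq_right hhalf] at e20
    linarith
  funext i j
  fin_cases i <;> fin_cases j <;>
    simp [h00, h01, h02, h10, h11, h12, h20, h21, h22]
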